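/- Let d ≥ 2 and let ρ be a positive semidefinite operator on ℂ^d with Tr ρ = 1. Then Tr[(ρ⊗I) P₊ (ρ⊗I) P₋] = 0 if and only if ρ = I/d, where P_± = (I⊗I ± SWAP)/2 are the symmetric and antisymmetric projectors on ℂ^d ⊗ ℂ^d. -/

import Mathlib

open Matrix Kronecker
open scoped ComplexOrder

/-- The SWAP operator on ℂ^d ⊗ ℂ^d. -/
noncomputable def swapOp (d : ℕ) : Matrix (Fin d × Fin d) (Fin d × Fin d) ℂ :=
  Matrix.of fun p q => if p.1 = q.2 ∧ p.2 = q.1 then 1 else 0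

/-- The projector onto the symmetric subspace. -/
noncomputable def Psym (d : ℕ) : Matrix (Fin d × Fin d) (Fin d × Fin d) ℂ :=
  (1/2 : ℂ) • (1 + swapOp d)

/-- The projector onto the antisymmetric subspace. -/
noncomputable def Pasym (d : ℕ) : Matrix (Fin d × Fin d) (Fin d × Fin d) ℂ :=
  (1/2 : ℂ) • (1 - swapOp d)

lemma swap_apply (d : ℕ) (p q : Fin d × Fin d) :
    swapOp d p q = if (p.2, p.1) = q then 1 else 0 := by
  simp [swapOp, Prod.ext_iff, and_comm]

lemma mul_swap {d : ℕ} (M : Matrix (Fin d × Fin d) (Fin d × Fin d) ℂ) (p q) :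
    (M * swapOp d) p q = M p (q.2, q.1) := by
  rw [Matrix.mul_apply, Finset.sum_eq_single (q.2, q.1)]
  · simp [swap_apply]
  · intro r _ hr
    rw [swap_apply]
    have : (r.2, r.1) ≠ q := by intro h; apply hr; rw [← h]
    simp [this]
  · simp

lemma swap_mul {d : ℕ} (M : Matrix (Fin d × Fin d) (Fin d × Fin d) ℂ) (p q) :
    (swapOp d * M) p q = M (p.2, p.1) q := by
  rw [Matrix.mul_apply, Finset.sum_eq_single (p.2, p.1)]
  · simp [swap_apply]
  · intro r _ hr
    simp [swap_apply, Ne.symm hr]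
  · simp

lemma swap_mul_swap (d : ℕ) : swapOp d * swapOp d = 1 := by
  ext p q
  rw [mul_swap, swap_apply, Matrix.one_apply]
  simp [Prod.ext_iff, and_comm]

lemma kron_swap {d : ℕ} (X Y : Matrix (Fin d) (Fin d) ℂ) :
    (X ⊗ₖ Y) * swapOp d = swapOp d * (Y ⊗ₖ X) := by
  ext p q
  rw [mul_swap, swap_mul]
  simp [Matrix.kroneckerMap_apply, mul_comm]

lemma key_trace {d : ℕ} (ρ : Matrix (Fin d) (Fin d) ℂ) (htr : ρ.trace = 1) :
    ((ρ ⊗ₖ (1 : Matrix (Fin d) (Fin d) ℂ)) * Psym d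
        * (ρ ⊗ₖ (1 : Matrix (Fin d) (Fin d) ℂ)) * Pasym d).trace
      = (1/4 : ℂ) * ((d : ℂ) * (ρ * ρ).trace - 1) := by
  set A := ρ ⊗ₖ (1 : Matrix (Fin d) (Fin d) ℂ) with hA
  set S := swapOp d with hS
  have h1 : A*(1+S)*A*(1-S) = A*A + A*S*A - A*A*S - A*S*A*S := by noncomm_ring
  have hexp : A * Psym d * A * Pasym d
      = (1/4 : ℂ) • (A*A + A*S*A - A*A*S - A*S*A*S) := by
    rw [Psym, Pasym, ← hS]
    rw [Matrix.mul_smul, Matrix.mul_smul, Matrix.smul_mul, Matrix.smul_mul, smul_smul, h1]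
    norm_num
  have hAA : A * A = (ρ * ρ) ⊗ₖ (1 : Matrix (Fin d) (Fin d) ℂ) := by
    rw [hA, ← Matrix.mul_kronecker_mul, mul_one]
  have hASAS : A * S * A * S = ρ ⊗ₖ ρ := by
    rw [hS, hA, kron_swap, mul_assoc (swapOp d), ← Matrix.mul_kronecker_mul, one_mul, mul_one,
      mul_assoc, kron_swap, ← mul_assoc, swap_mul_swap, one_mul]
  have hc : (A*S*A).trace = (A*A*S).trace := by
    rw [Matrix.trace_mul_comm (A*S) A, ← mul_assoc]
  rw [hexp, Matrix.trace_smul, Matrix.trace_sub, Matrix.trace_sub, Matrix.trace_add, hc,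
    hASAS, hAA, Matrix.trace_kronecker, Matrix.trace_kronecker, Matrix.trace_one, htr]
  simp only [smul_eq_mul, Fintype.card_fin]
  ring

lemma eq_zero_of_trace_conjTranspose_mul_self {d : ℕ} (A : Matrix (Fin d) (Fin d) ℂ)
    (h : (Aᴴ * A).trace = 0) : A = 0 := by
  have h' : ∑ j, ∑ i, (Complex.normSq (A i j) : ℂ) = 0 := by
    rw [← h]
    simp only [Matrix.trace, Matrix.diag, Matrix.mul_apply, Matrix.conjTranspose_apply,
      Complex.star_def]
    congr 1; ext j; congr 1; ext i
    rw [Complex.normSq_eq_conj_mul_self]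
  have h2 : ∑ j, ∑ i, Complex.normSq (A i j) = 0 := by exact_mod_cast h'
  ext i j
  have h3 := (Finset.sum_eq_zero_iff_of_nonneg (fun j _ =>
    Finset.sum_nonneg fun i _ => Complex.normSq_nonneg _)).mp h2 j (Finset.mem_univ _)
  have h4 := (Finset.sum_eq_zero_iff_of_nonneg (fun i _ =>
    Complex.normSq_nonneg _)).mp h3 i (Finset.mem_univ _)
  simpa [Complex.normSq_eq_zero] using h4

/-- For a density matrix ρ on ℂ^d (d ≥ 2), Tr[(ρ⊗I) P₊ (ρ⊗I) P₋] = 0 iff ρ = I/d. -/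
theorem stmt8 {d : ℕ} (hd : 2 ≤ d) (ρ : Matrix (Fin d) (Fin d) ℂ)
    (hρ : ρ.PosSemidef) (htr : ρ.trace = 1) :
    ((ρ ⊗ₖ (1 : Matrix (Fin d) (Fin d) ℂ)) * Psym d
        * (ρ ⊗ₖ (1 : Matrix (Fin d) (Fin d) ℂ)) * Pasym d).trace = 0
      ↔ ρ = ((d : ℂ))⁻¹ • (1 : Matrix (Fin d) (Fin d) ℂ) := by
  have hd0 : (d : ℂ) ≠ 0 := Nat.cast_ne_zero.mpr (by omega)
  rw [key_trace ρ htr]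
  constructor
  · intro h
    have hT : (ρ * ρ).trace = (d : ℂ)⁻¹ := by
      have h4 : (d : ℂ) * (ρ * ρ).trace - 1 = 0 := by
        have := mul_eq_zero.mp h
        rcases this with h' | h'
        · norm_num at h'
        · exact h'
      field_simp
      linear_combination h4
    -- σ := ρ - d⁻¹ • 1
    set c : ℂ := (d : ℂ)⁻¹ with hcdef
    have hcstar : star c = c := by
      rw [hcdef, star_inv₀]
      norm_cast
    have hherm : ρᴴ = ρ := hρ.1
    have hσ : ((ρ - c • 1)ᴴ * (ρ - c • 1)).trace = 0 := by
      rw [Matrix.conjTranspose_sub, hherm, Matrix.conjTranspose_smul, hcstar,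
        Matrix.conjTranspose_one]
      simp only [Matrix.sub_mul, Matrix.mul_sub, Matrix.smul_mul, Matrix.mul_smul, one_mul,
        mul_one, smul_smul, Matrix.trace_sub, Matrix.trace_smul, Matrix.trace_one, hT, htr,
        smul_eq_mul, Fintype.card_fin]
      rw [hcdef]
      field_simp
      ring
    have := eq_zero_of_trace_conjTranspose_mul_self _ hσ
    have := sub_eq_zero.mp this
    exact this
  · intro h
    subst h
    have : ((((d:ℂ))⁻¹ • (1 : Matrix (Fin d) (Fin d) ℂ)) *
        (((d:ℂ))⁻¹ • (1 : Matrix (Fin d) (Fin d) ℂ))).trace = (d:ℂ)⁻¹ := by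
      rw [Matrix.smul_mul, Matrix.mul_smul, one_mul, smul_smul, Matrix.trace_smul,
        Matrix.trace_one]
      field_simp
      rw [Fintype.card_fin, smul_eq_mul]
      field_simp
    rw [this]
    field_simp
    ring
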